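/- Let (i,k,ℓ) be a permutation of (1,2,3) and let r : I → SO(3) be absolutely continuous with rows r₁, r₂, r₃ satisfying r_k' · r_ℓ = 0 almost everywhere on I. Set β = r_i : I → S². Then for j = k and for j = ℓ, the row r_j is the parallel transport of r_j(0) along β, i.e. r_j(t) = Π_{β|_(0,t)} r_j(0) for all t ∈ I; equivalently, r_j'(t) = −(r_j(t) · β'(t)) β(t) almost everywhere on I. -/

import Mathlib

open MeasureTheory Set Filter Matrix
open scoped RealInnerProductSpace Topology

noncomputable section

/-- Euclidean 3-space. -/
abbrev E3 : Type := EuclideanSpace ℝ (Fin 3)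

/-- Cross product on `ℝ³`. -/
def cross3 (v w : E3) : E3 :=
  (WithLp.equiv 2 (Fin 3 → ℝ)).symm
    ![v 1 * w 2 - v 2 * w 1, v 2 * w 0 - v 0 * w 2, v 0 * w 1 - v 1 * w 0]

/-- The `i`-th row of a 3×3 matrix, as a vector in `ℝ³`; for `r ∈ SO(3)` this is `rᵀ eᵢ`. -/
def row3 (M : Matrix (Fin 3) (Fin 3) ℝ) (i : Fin 3) : E3 :=
  (WithLp.equiv 2 (Fin 3 → ℝ)).symm (M i)

/-- The set of rotation matrices. -/
def SO3 : Set (Matrix (Fin 3) (Fin 3) ℝ) :=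
  {M | M * Mᵀ = 1 ∧ M.det = 1}

/-- Lebesgue measure restricted to the unit interval `I = (0,1)`. -/
def muI : Measure ℝ := volume.restrict (Set.Ioo 0 1)

/-- `f` is absolutely continuous on `[a,b]` with (a.e.) derivative `f'` (fundamental theorem of
calculus form); this encodes `f ∈ W^{1,1}((a,b))` via its continuous representative. -/
def FTCOn (f f' : ℝ → E3) (a b : ℝ) : Prop :=
  IntervalIntegrable f' volume a b ∧
  ∀ t ∈ Set.Icc a b, f t = f a + ∫ s in a..t, f' s

/-- `V` is the parallel transport of `v` along the spherical curve `β` (with derivative `β'`)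
on `[a,b]`: the absolutely continuous solution of `V' = -(V·β')β`, `V a = v`, in integral form.
`V t` is the quantity denoted `Π_{β|_(a,t)} v`. -/
def IsParTrans (β β' : ℝ → E3) (a b : ℝ) (v : E3) (V : ℝ → E3) : Prop :=
  V a = v ∧
  IntervalIntegrable (fun s => ⟪V s, β' s⟫ • β s) volume a b ∧
  ∀ t ∈ Set.Icc a b, V t = v - ∫ s in a..t, ⟪V s, β' s⟫ • β s

/-- Lebesgue differentiation / FTC for integrable functions: a.e., the indefinite integral
has derivative the integrand. -/
lemma ae_hasDerivAt_of_integrable {h : ℝ → E3} (hh : Integrable h) :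
    ∀ᵐ t ∂(volume : Measure ℝ), HasDerivAt (fun u => ∫ s in (0:ℝ)..u, h s) (h t) t := by
  filter_upwards [IsUnifLocDoublingMeasure.ae_tendsto_average_norm_sub (μ := volume)
    hh.locallyIntegrable 1] with t ht
  have δlim : Tendsto (fun x : ℝ => dist x t) (𝓝[≠] t) (𝓝[>] 0) := by
    rw [tendsto_nhdsWithin_iff]
    constructor
    · exact Filter.Tendsto.mono_left (tendsto_iff_dist_tendsto_zero.mp tendsto_id)
        nhdsWithin_le_nhds
    · exact eventually_mem_nhdsWithin.mono (fun x hx => dist_pos.2 hx)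
  have xmem : ∀ᶠ x : ℝ in 𝓝[≠] t, t ∈ Metric.closedBall ((fun _ => t) x) (1 * dist x t) :=
    Eventually.of_forall fun x => by simp [dist_nonneg]
  have A : Tendsto (fun x : ℝ => ⨍ y in Metric.closedBall t (dist x t), ‖h y - h t‖)
      (𝓝[≠] t) (𝓝 0) := ht _ _ δlim xmem
  rw [hasDerivAt_iff_tendsto]
  rw [← nhdsNE_sup_pure t, tendsto_sup]
  constructor
  · apply squeeze_zero' (Eventually.of_forall fun x => by positivity)
      ?_ (by simpa using A.const_mul 2)
    filter_upwards [self_mem_nhdsWithin] with x (hx : x ≠ t)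
    have hr : 0 < dist x t := dist_pos.2 hx
    have hii : IntervalIntegrable h volume t x := hh.intervalIntegrable
    have e1 : (∫ s in (0:ℝ)..x, h s) - (∫ s in (0:ℝ)..t, h s) = ∫ s in t..x, h s :=
      intervalIntegral.integral_interval_sub_left hh.intervalIntegrable hh.intervalIntegrable
    have e2 : (∫ s in t..x, h s) - (x - t) • h t = ∫ s in t..x, (h s - h t) := by
      rw [intervalIntegral.integral_sub hii (intervalIntegrable_const)]
      simp
    have bound : ‖(∫ s in t..x, h s) - (x - t) • h t‖
        ≤ ∫ y in Metric.closedBall t (dist x t), ‖h y - h t‖ := by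
      rw [e2]
      refine (intervalIntegral.norm_integral_le_integral_norm_uIoc).trans ?_
      apply setIntegral_mono_set
        ((hh.integrableOn.sub (integrableOn_const measure_closedBall_lt_top.ne)).norm)
        (Eventually.of_forall fun y => norm_nonneg _)
      apply HasSubset.Subset.eventuallyLE
      intro y hy
      rw [Set.mem_uIoc] at hy
      rw [Metric.mem_closedBall, Real.dist_eq, Real.dist_eq]
      rcases hy with ⟨h1, h2⟩ | ⟨h1, h2⟩ <;> [skip; skip] <;>
        · rw [abs_le]; constructor <;> cases abs_cases (x - t) <;> nlinarith
    have evol : (volume (Metric.closedBall t (dist x t))).toReal = 2 * dist x t := by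
      rw [Real.volume_closedBall, ENNReal.toReal_ofReal (by positivity)]
    have eint : ∫ y in Metric.closedBall t (dist x t), ‖h y - h t‖
        = 2 * dist x t * ⨍ y in Metric.closedBall t (dist x t), ‖h y - h t‖ := by
      rw [setAverage_eq, smul_eq_mul, measureReal_def, evol, ← mul_assoc, mul_inv_cancel₀ (by positivity), one_mul]
    calc ‖x - t‖⁻¹ * ‖(∫ s in (0:ℝ)..x, h s) - (∫ s in (0:ℝ)..t, h s) - (x - t) • h t‖
        ≤ ‖x - t‖⁻¹ * (2 * dist x t * ⨍ y in Metric.closedBall t (dist x t), ‖h y - h t‖) := by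
          rw [e1]
          exact mul_le_mul_of_nonneg_left (bound.trans_eq eint) (by positivity)
      _ = 2 * ⨍ y in Metric.closedBall t (dist x t), ‖h y - h t‖ := by
          rw [Real.norm_eq_abs, ← Real.dist_eq]
          field_simp
  · have : ∀ᶠ x : ℝ in pure t, ‖x - t‖⁻¹ * ‖(∫ s in (0:ℝ)..x, h s) - (∫ s in (0:ℝ)..t, h s)
        - (x - t) • h t‖ = 0 := by simp
    rw [tendsto_congr' this]
    exact tendsto_const_nhds

/-- The rows of a rotation matrix are orthonormal. -/
lemma inner_row3 {M : Matrix (Fin 3) (Fin 3) ℝ} (hM : M ∈ SO3) (a b : Fin 3) :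
    ⟪row3 M a, row3 M b⟫ = if a = b then (1:ℝ) else 0 := by
  have h := congrFun (congrFun hM.1 a) b
  simp only [Matrix.mul_apply, Matrix.transpose_apply, Matrix.one_apply] at h
  rw [← h]
  simp [row3, PiLp.inner_apply, RCLike.inner_apply, WithLp.equiv_symm_apply, PiLp.toLp_apply, mul_comm]

/-- Expansion of a vector in the orthonormal basis given by the rows of a rotation matrix. -/
lemma expand_row3 {M : Matrix (Fin 3) (Fin 3) ℝ} (hM : M ∈ SO3) (v : E3) :
    v = ∑ a : Fin 3, ⟪v, row3 M a⟫ • row3 M a := by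
  have h1 : Mᵀ * M = 1 := mul_eq_one_comm.mp hM.1
  have h2 : ∀ b c : Fin 3, ∑ a : Fin 3, M a b * M a c = (1 : Matrix (Fin 3) (Fin 3) ℝ) b c := by
    intro b c
    rw [← h1]; simp [Matrix.mul_apply, Matrix.transpose_apply]
  ext c
  simp only [Finset.sum_apply, PiLp.smul_apply, smul_eq_mul, row3, PiLp.inner_apply,
    RCLike.inner_apply, WithLp.equiv_symm_apply, PiLp.toLp_apply, WithLp.ofLp_sum, WithLp.ofLp_smul, conj_trivial]
  rw [show (∑ a : Fin 3, ((∑ x, M a x * v.ofLp x) • M a) c) = ∑ a : Fin 3, (∑ b, v.ofLp b * M a b) * M a c from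
    Finset.sum_congr rfl fun a _ => by
      simp only [Pi.smul_apply, smul_eq_mul]; congr 1; exact Finset.sum_congr rfl fun _ _ => mul_comm _ _]
  calc v c = ∑ b : Fin 3, v b * (1 : Matrix (Fin 3) (Fin 3) ℝ) b c := by
        simp [Matrix.one_apply]
    _ = ∑ b : Fin 3, v b * ∑ a : Fin 3, M a b * M a c := by
        simp_rw [h2]
    _ = ∑ a : Fin 3, (∑ b : Fin 3, v b * M a b) * M a c := by
        simp_rw [Finset.mul_sum, Finset.sum_mul]
        rw [Finset.sum_comm]
        congr 1; ext a; congr 1; ext b; ring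

theorem statement0
    (r r' : ℝ → Matrix (Fin 3) (Fin 3) ℝ)
    (hSO : ∀ t ∈ Set.Icc (0:ℝ) 1, r t ∈ SO3)
    (hAC : ∀ i : Fin 3, FTCOn (fun t => row3 (r t) i) (fun t => row3 (r' t) i) 0 1)
    (i k l : Fin 3) (hik : i ≠ k) (hkl : k ≠ l) (hil : i ≠ l)
    (hconstraint : ∀ᵐ t ∂muI, ⟪row3 (r' t) k, row3 (r t) l⟫ = 0)
    (j : Fin 3) (hj : j = k ∨ j = l) :
    IsParTrans (fun t => row3 (r t) i) (fun t => row3 (r' t) i) 0 1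
      (row3 (r 0) j) (fun t => row3 (r t) j) ∧
    ∀ᵐ t ∂muI, row3 (r' t) j = -(⟪row3 (r t) j, row3 (r' t) i⟫) • row3 (r t) i := by
  have hmuI : muI = volume.restrict (Ioo 0 1) := rfl
  have hcover : ∀ a : Fin 3, a = i ∨ a = k ∨ a = l := by
    intro a
    have h1 := a.isLt; have h2 := i.isLt; have h3 := k.isLt; have h4 := l.isLt
    simp only [Ne, Fin.ext_iff] at hik hkl hil ⊢
    omega
  have hint : ∀ a : Fin 3, IntegrableOn (fun s => row3 (r' s) a) (Ioc 0 1) volume := fun a =>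
    (intervalIntegrable_iff_integrableOn_Ioc_of_le zero_le_one).mp (hAC a).1
  set g : Fin 3 → ℝ → E3 := fun a => (Ioc (0:ℝ) 1).indicator (fun s => row3 (r' s) a) with hg
  have hgint : ∀ a, Integrable (g a) volume := fun a =>
    (integrable_indicator_iff measurableSet_Ioc).mpr (hint a)
  have hFeq : ∀ a : Fin 3, ∀ u ∈ Icc (0:ℝ) 1,
      (∫ s in (0:ℝ)..u, g a s) = ∫ s in (0:ℝ)..u, row3 (r' s) a := by
    intro a u hu
    rw [intervalIntegral.integral_of_le hu.1, intervalIntegral.integral_of_le hu.1]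
    apply setIntegral_congr_fun measurableSet_Ioc
    intro s hs
    exact Set.indicator_of_mem (Ioc_subset_Ioc_right hu.2 hs) _
  have hderiv : ∀ᵐ t ∂muI, ∀ a : Fin 3,
      HasDerivAt (fun u => row3 (r u) a) (row3 (r' t) a) t := by
    rw [hmuI]
    have hmem : ∀ᵐ t ∂(volume.restrict (Ioo (0:ℝ) 1)), t ∈ Ioo (0:ℝ) 1 :=
      ae_restrict_mem measurableSet_Ioo
    have hd : ∀ᵐ t ∂(volume.restrict (Ioo (0:ℝ) 1)), ∀ a : Fin 3,
        HasDerivAt (fun u => ∫ s in (0:ℝ)..u, g a s) (g a t) t := by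
      apply ae_restrict_of_ae
      rw [ae_all_iff]
      exact fun a => ae_hasDerivAt_of_integrable (hgint a)
    filter_upwards [hmem, hd] with t ht hd a
    have h1 : HasDerivAt (fun u => row3 (r 0) a + ∫ s in (0:ℝ)..u, g a s) (g a t) t :=
      (hd a).const_add _
    have h2 : (fun u => row3 (r 0) a + ∫ s in (0:ℝ)..u, g a s)
        =ᶠ[𝓝 t] fun u => row3 (r u) a := by
      filter_upwards [Ioo_mem_nhds ht.1 ht.2] with u hu
      rw [hFeq a u (Ioo_subset_Icc_self hu)]
      exact ((hAC a).2 u (Ioo_subset_Icc_self hu)).symm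
    have h3 := h1.congr_of_eventuallyEq h2.symm
    have h4 : g a t = row3 (r' t) a := Set.indicator_of_mem (Ioo_subset_Ioc_self ht) _
    rwa [h4] at h3
  have hae : ∀ᵐ t ∂muI, row3 (r' t) j = -(⟪row3 (r t) j, row3 (r' t) i⟫) • row3 (r t) i := by
    have hmem : ∀ᵐ t ∂muI, t ∈ Ioo (0:ℝ) 1 := by
      rw [hmuI]; exact ae_restrict_mem measurableSet_Ioo
    filter_upwards [hderiv, hmem, hconstraint] with t hd ht hc
    have htI : t ∈ Icc (0:ℝ) 1 := Ioo_subset_Icc_self ht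
    have skew : ∀ a b : Fin 3,
        ⟪row3 (r' t) a, row3 (r t) b⟫ + ⟪row3 (r t) a, row3 (r' t) b⟫ = 0 := by
      intro a b
      have hG : HasDerivAt (fun u => ⟪row3 (r u) a, row3 (r u) b⟫)
          (⟪row3 (r t) a, row3 (r' t) b⟫ + ⟪row3 (r' t) a, row3 (r t) b⟫) t :=
        (hd a).inner ℝ (hd b)
      have heq : (fun u => ⟪row3 (r u) a, row3 (r u) b⟫) =ᶠ[𝓝 t]
          (fun _ => if a = b then (1:ℝ) else 0) := by
        filter_upwards [Ioo_mem_nhds ht.1 ht.2] with u hu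
        exact inner_row3 (hSO u (Ioo_subset_Icc_self hu)) a b
      have hG0 : HasDerivAt (fun u => ⟪row3 (r u) a, row3 (r u) b⟫) 0 t :=
        (hasDerivAt_const t _).congr_of_eventuallyEq heq
      have := hG.unique hG0
      linarith
    have hcoef : ∀ a : Fin 3, a ≠ i → ⟪row3 (r' t) j, row3 (r t) a⟫ = 0 := by
      intro a ha
      have hjj : ∀ b : Fin 3, ⟪row3 (r' t) b, row3 (r t) b⟫ = 0 := by
        intro b
        have h := skew b b
        have h2 : ⟪row3 (r t) b, row3 (r' t) b⟫ = ⟪row3 (r' t) b, row3 (r t) b⟫ :=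
          real_inner_comm _ _
        linarith
      have hlk : ⟪row3 (r' t) l, row3 (r t) k⟫ = 0 := by
        have h := skew k l
        have h2 : ⟪row3 (r t) k, row3 (r' t) l⟫ = ⟪row3 (r' t) l, row3 (r t) k⟫ :=
          real_inner_comm _ _
        linarith
      rcases hcover a with rfl | rfl | rfl
      · exact absurd rfl ha
      · rcases hj with rfl | rfl
        · exact hjj _
        · exact hlk
      · rcases hj with rfl | rfl
        · exact hc
        · exact hjj _
    have hexp := expand_row3 (hSO t htI) (row3 (r' t) j)
    rw [Finset.sum_eq_single_of_mem i (Finset.mem_univ i)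
      (fun a _ ha => by rw [hcoef a ha, zero_smul])] at hexp
    rw [hexp]
    congr 1
    have h := skew j i
    linarith
  have hImuI : muI = volume.restrict (Ioc 0 1) := Measure.restrict_congr_set Ioo_ae_eq_Ioc
  have haeIoc : ∀ᵐ s ∂(volume.restrict (Ioc (0:ℝ) 1)),
      ⟪row3 (r s) j, row3 (r' s) i⟫ • row3 (r s) i = -(row3 (r' s) j) := by
    rw [← hImuI]
    filter_upwards [hae] with s hs
    rw [hs, neg_smul, neg_neg]
  have hII : IntegrableOn (fun s => ⟪row3 (r s) j, row3 (r' s) i⟫ • row3 (r s) i)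
      (Ioc 0 1) volume :=
    (hint j).neg.congr (haeIoc.mono fun s hs => hs.symm)
  refine ⟨⟨rfl, (intervalIntegrable_iff_integrableOn_Ioc_of_le zero_le_one).mpr hII, ?_⟩, hae⟩
  intro t ht
  have h2 : (∫ s in (0:ℝ)..t, ⟪row3 (r s) j, row3 (r' s) i⟫ • row3 (r s) i)
      = ∫ s in (0:ℝ)..t, -(row3 (r' s) j) := by
    apply intervalIntegral.integral_congr_ae
    have h3 := (ae_restrict_iff' measurableSet_Ioc).mp haeIoc
    filter_upwards [h3] with s hs hsI
    apply hs
    rw [Set.uIoc_of_le ht.1] at hsI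
    exact Ioc_subset_Ioc_right ht.2 hsI
  show row3 (r t) j = row3 (r 0) j - ∫ s in (0:ℝ)..t, ⟪row3 (r s) j, row3 (r' s) i⟫ • row3 (r s) i
  rw [h2, intervalIntegral.integral_neg, sub_neg_eq_add]
  exact (hAC j).2 t ht
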